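/- Let B₁, B₂, B₃, B₄ be the Bell states in ℂ²⊗ℂ² and σ the four-qubit reordering isomorphism. For an ordered pair (i,j) with i ≠ j, define the outcome set N(i,j) := { (a,b) ∈ {1,2,3,4}² : ⟨B_a ⊗ B_b, σ(B_i ⊗ B_j)⟩ ≠ 0 }. Then for any two distinct unordered pairs {i,j} ≠ {k,l} contained in {1,2,3}, the sets N(i,j) and N(k,l) are disjoint. (This establishes the correctness of the local Bell-measurement protocol proving that any three Bell states form a (3,2)-identifiable set: tallying the local Bell-basis outcomes perfectly reveals which unordered pair of Bell states from {B₁,B₂,B₃} was distributed.) -/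

import Mathlib

open scoped InnerProductSpace

noncomputable section

/-- The standard basis kets `|0⟩, |1⟩` of a qubit `ℂ² = EuclideanSpace ℂ (Fin 2)`. -/
def ket2 (i : Fin 2) : EuclideanSpace ℂ (Fin 2) := EuclideanSpace.single i 1

/-- Tensor product of vectors of Euclidean spaces, realized concretely:
`(x ⊗ y) (i, j) = x i * y j`.  The induced inner product on
`EuclideanSpace ℂ (ι × κ)` is exactly the tensor-product inner product. -/
def tp {ι κ : Type*} [Fintype ι] [Fintype κ]
    (x : EuclideanSpace ℂ ι) (y : EuclideanSpace ℂ κ) : EuclideanSpace ℂ (ι × κ) :=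
  (WithLp.equiv 2 _).symm fun p => x p.1 * y p.2

/-- The four Bell states `B₁, B₂, B₃, B₄` (indexed here by `0,1,2,3`). -/
def Bell : Fin 4 → EuclideanSpace ℂ (Fin 2 × Fin 2) :=
  ![((Real.sqrt 2 : ℂ))⁻¹ • (tp (ket2 0) (ket2 0) + tp (ket2 1) (ket2 1)),
    ((Real.sqrt 2 : ℂ))⁻¹ • (tp (ket2 0) (ket2 0) - tp (ket2 1) (ket2 1)),
    ((Real.sqrt 2 : ℂ))⁻¹ • (tp (ket2 0) (ket2 1) + tp (ket2 1) (ket2 0)),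
    ((Real.sqrt 2 : ℂ))⁻¹ • (tp (ket2 0) (ket2 1) - tp (ket2 1) (ket2 0))]

namespace BellAux

variable {ι κ : Type*} [Fintype ι] [Fintype κ]

lemma tp_apply (x : EuclideanSpace ℂ ι) (y : EuclideanSpace ℂ κ) (p : ι × κ) :
    tp x y p = x p.1 * y p.2 := rfl

lemma tp_smul_left (c : ℂ) (x : EuclideanSpace ℂ ι) (y : EuclideanSpace ℂ κ) :
    tp (c • x) y = c • tp x y := by
  ext p; simp [tp_apply, mul_assoc]

lemma tp_smul_right (c : ℂ) (x : EuclideanSpace ℂ ι) (y : EuclideanSpace ℂ κ) :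
    tp x (c • y) = c • tp x y := by
  ext p; simp [tp_apply]; ring

lemma tp_add_left (x x' : EuclideanSpace ℂ ι) (y : EuclideanSpace ℂ κ) :
    tp (x + x') y = tp x y + tp x' y := by
  ext p; simp [tp_apply]; ring

lemma tp_add_right (x : EuclideanSpace ℂ ι) (y y' : EuclideanSpace ℂ κ) :
    tp x (y + y') = tp x y + tp x y' := by
  ext p; simp [tp_apply]; ring

lemma tp_sub_left (x x' : EuclideanSpace ℂ ι) (y : EuclideanSpace ℂ κ) :
    tp (x - x') y = tp x y - tp x' y := by
  ext p; simp [tp_apply]; ring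

lemma tp_sub_right (x : EuclideanSpace ℂ ι) (y y' : EuclideanSpace ℂ κ) :
    tp x (y - y') = tp x y - tp x y' := by
  ext p; simp [tp_apply]; ring

lemma inner_tp (x z : EuclideanSpace ℂ ι) (y w : EuclideanSpace ℂ κ) :
    ⟪tp x y, tp z w⟫_ℂ = ⟪x, z⟫_ℂ * ⟪y, w⟫_ℂ := by
  simp only [PiLp.inner_apply, tp_apply, RCLike.inner_apply, map_mul]
  rw [Finset.sum_mul_sum, ← Finset.univ_product_univ, Finset.sum_product]
  apply Finset.sum_congr rfl; intro p _
  apply Finset.sum_congr rfl; intro q _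
  ring

lemma inner_ket (x z : Fin 2) : ⟪ket2 x, ket2 z⟫_ℂ = if x = z then 1 else 0 := by
  simp [ket2, EuclideanSpace.inner_single_left, EuclideanSpace.single_apply]

/-- Klein four-group multiplication on the Bell-state labels. -/
def km : Fin 4 → Fin 4 → Fin 4 := fun a b =>
  ![![0,1,2,3],![1,0,3,2],![2,3,0,1],![3,2,1,0]] a b

set_option maxHeartbeats 8000000 in
/-- The outcome `(a,b)` has nonzero amplitude iff `km a b = km i j`. -/
lemma master
    (σ : EuclideanSpace ℂ ((Fin 2 × Fin 2) × (Fin 2 × Fin 2)) →ₗ[ℂ]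
         EuclideanSpace ℂ ((Fin 2 × Fin 2) × (Fin 2 × Fin 2)))
    (hσ : ∀ a₁ b₁ a₂ b₂ : EuclideanSpace ℂ (Fin 2),
      σ (tp (tp a₁ b₁) (tp a₂ b₂)) = tp (tp a₁ a₂) (tp b₁ b₂))
    (a b i j : Fin 4) (hi : i ≠ 3) (hj : j ≠ 3) (hij : i ≠ j) :
    (⟪tp (Bell a) (Bell b), σ (tp (Bell i) (Bell j))⟫_ℂ ≠ 0 ↔ km a b = km i j) := by
  have h4 : ∀ x : Fin 4, x = 0 ∨ x = 1 ∨ x = 2 ∨ x = 3 := by decide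
  rcases h4 a with rfl|rfl|rfl|rfl <;> rcases h4 b with rfl|rfl|rfl|rfl <;>
  rcases h4 i with rfl|rfl|rfl|rfl <;> rcases h4 j with rfl|rfl|rfl|rfl <;>
  first
  | exact absurd rfl hi
  | exact absurd rfl hj
  | exact absurd rfl hij
  | · simp only [Bell, km, Matrix.cons_val_zero, Matrix.cons_val_one, Matrix.head_cons,
        Matrix.cons_val_two, Matrix.cons_val_three, Matrix.tail_cons, Matrix.cons_val',
        Matrix.cons_val_fin_one, Matrix.empty_val', Fin.isValue,
        tp_smul_left, tp_smul_right, tp_add_left, tp_add_right, tp_sub_left, tp_sub_right,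
        map_add, map_sub, map_smul, hσ,
        inner_add_left, inner_sub_left, inner_smul_left,
        inner_add_right, inner_sub_right, inner_smul_right,
        inner_tp, inner_ket]
      norm_num [Complex.ext_iff, Real.sq_sqrt, mul_self_nonneg]
      all_goals first
      | decide
      | (intro h
         nlinarith [Real.sq_sqrt (by norm_num : (0:ℝ) ≤ 2), Real.sqrt_nonneg 2,
           Real.sqrt_pos.mpr (by norm_num : (0:ℝ) < 2)])

end BellAux

theorem bell_32_identifiable_outcomes_disjoint
    (σ : EuclideanSpace ℂ ((Fin 2 × Fin 2) × (Fin 2 × Fin 2)) →ₗ[ℂ]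
         EuclideanSpace ℂ ((Fin 2 × Fin 2) × (Fin 2 × Fin 2)))
    (hσ : ∀ a₁ b₁ a₂ b₂ : EuclideanSpace ℂ (Fin 2),
      σ (tp (tp a₁ b₁) (tp a₂ b₂)) = tp (tp a₁ a₂) (tp b₁ b₂))
    (i j k l : Fin 4)
    (hi : i ∈ ({0, 1, 2} : Set (Fin 4))) (hj : j ∈ ({0, 1, 2} : Set (Fin 4)))
    (hk : k ∈ ({0, 1, 2} : Set (Fin 4))) (hl : l ∈ ({0, 1, 2} : Set (Fin 4)))
    (hij : i ≠ j) (hkl : k ≠ l)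
    (hpairs : ({i, j} : Set (Fin 4)) ≠ ({k, l} : Set (Fin 4))) :
    Disjoint
      {p : Fin 4 × Fin 4 | ⟪tp (Bell p.1) (Bell p.2), σ (tp (Bell i) (Bell j))⟫_ℂ ≠ 0}
      {p : Fin 4 × Fin 4 | ⟪tp (Bell p.1) (Bell p.2), σ (tp (Bell k) (Bell l))⟫_ℂ ≠ 0} := by
  have hi' : i = 0 ∨ i = 1 ∨ i = 2 := by simpa using hi
  have hj' : j = 0 ∨ j = 1 ∨ j = 2 := by simpa using hj
  have hk' : k = 0 ∨ k = 1 ∨ k = 2 := by simpa using hk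
  have hl' : l = 0 ∨ l = 1 ∨ l = 2 := by simpa using hl
  have hi3 : i ≠ 3 := by rcases hi' with rfl|rfl|rfl <;> decide
  have hj3 : j ≠ 3 := by rcases hj' with rfl|rfl|rfl <;> decide
  have hk3 : k ≠ 3 := by rcases hk' with rfl|rfl|rfl <;> decide
  have hl3 : l ≠ 3 := by rcases hl' with rfl|rfl|rfl <;> decide
  rw [Set.disjoint_left]
  rintro ⟨a, b⟩ h1 h2
  simp only [Set.mem_setOf_eq] at h1 h2
  rw [BellAux.master σ hσ a b i j hi3 hj3 hij] at h1
  rw [BellAux.master σ hσ a b k l hk3 hl3 hkl] at h2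
  have hkm : BellAux.km i j = BellAux.km k l := h1 ▸ h2
  clear h1 h2
  rcases hi' with rfl|rfl|rfl <;> rcases hj' with rfl|rfl|rfl <;>
  rcases hk' with rfl|rfl|rfl <;> rcases hl' with rfl|rfl|rfl <;>
  first
  | exact absurd rfl hij
  | exact absurd rfl hkl
  | exact hpairs rfl
  | exact hpairs (Set.pair_comm _ _)
  | exact absurd hkm (by decide)

end
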